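/- For the 3×3 matrix E with diagonal entries (−1/γ_1, −1/γ_2, −1/γ_3), entries E_{21}=E_{32}=1, E_{13}=−1, and zeros elsewhere (γ_i>0), diagonal stability of E is equivalent to γ_1γ_2γ_3 < 8. -/

import Mathlib

open Matrix

def NegDefQ {n : Type*} [Fintype n] (M : Matrix n n ℝ) : Prop :=
  ∀ x : n → ℝ, x ≠ 0 → x ⬝ᵥ M.mulVec x < 0

def DiagStable {n : Type*} [Fintype n] [DecidableEq n] (E : Matrix n n ℝ) : Prop :=
  ∃ d : n → ℝ, (∀ i, 0 < d i) ∧ NegDefQ (Eᵀ * diagonal d + diagonal d * E)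


/-- SOS identity: 3x3 symmetric matrix with positive leading minors is positive definite. -/
lemma pd_aux (a1 a2 a3 b12 b13 b23 v1 v2 v3 : ℝ) (h1 : 0 < a1)
    (h2 : 0 < a1*a2 - b12^2)
    (h3 : 0 < a1*a2*a3 + 2*b12*b13*b23 - a1*b23^2 - a2*b13^2 - a3*b12^2)
    (hv : ¬(v1 = 0 ∧ v2 = 0 ∧ v3 = 0)) :
    0 < a1*v1^2 + a2*v2^2 + a3*v3^2 + 2*b12*v1*v2 + 2*b13*v1*v3 + 2*b23*v2*v3 := by
  have key : a1*(a1*a2-b12^2)*(a1*v1^2 + a2*v2^2 + a3*v3^2 + 2*b12*v1*v2 + 2*b13*v1*v3 + 2*b23*v2*v3)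
      = (a1*a2-b12^2)*(a1*v1 + b12*v2 + b13*v3)^2
        + ((a1*a2-b12^2)*v2 + (a1*b23 - b12*b13)*v3)^2
        + a1*(a1*a2*a3 + 2*b12*b13*b23 - a1*b23^2 - a2*b13^2 - a3*b12^2)*v3^2 := by ring
  have hprod : 0 < a1*(a1*a2-b12^2) := mul_pos h1 h2
  have hQpos : 0 < a1*(a1*a2-b12^2)*(a1*v1^2 + a2*v2^2 + a3*v3^2 + 2*b12*v1*v2 + 2*b13*v1*v3 + 2*b23*v2*v3) := by
    rw [key]
    by_cases hv3 : v3 = 0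
    · by_cases hv2 : v2 = 0
      · have hv1 : v1 ≠ 0 := by tauto
        subst hv3 hv2
        have hp2 : 0 < (a1*v1)^2 := by positivity
        nlinarith [mul_pos h2 hp2]
      · have : 0 < v2^2 := by positivity
        subst hv3
        nlinarith [sq_nonneg (a1*v1 + b12*v2), mul_pos (mul_pos h2 h2) this]
    · have : 0 < v3^2 := by positivity
      nlinarith [sq_nonneg (a1*v1 + b12*v2 + b13*v3),
        sq_nonneg ((a1*a2-b12^2)*v2 + (a1*b23 - b12*b13)*v3),
        mul_pos (mul_pos h1 h3) this]
  nlinarith [hQpos, hprod]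

/-- Necessity core: secant criterion contradiction when product ≥ 8. -/
lemma sec_key (g1 g2 g3 d1 d2 d3 : ℝ) (hg1 : 0 < g1) (hg2 : 0 < g2) (hg3 : 0 < g3)
    (hd1 : 0 < d1) (hd2 : 0 < d2) (hd3 : 0 < d3)
    (hG : 8 ≤ g1*g2*g3)
    (hA : g1*g2*d2 < 4*d1)
    (hB : g2*g3*d1*d3^2 + g1*g3*d1^2*d2 + g1*g2*d2^2*d3 < (4 + g1*g2*g3)*(d1*d2*d3)) :
    False := by
  set s := Real.sqrt (g1*g2*d2/(4*d1)) with hs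
  have harg : 0 < g1*g2*d2/(4*d1) := by positivity
  have hs0 : 0 < s := Real.sqrt_pos.mpr harg
  have hs2 : s^2 = g1*g2*d2/(4*d1) := Real.sq_sqrt harg.le
  have hs2' : s^2 * (4*d1) = g1*g2*d2 := by
    rw [hs2]; field_simp
  have hs1 : s < 1 := by
    have h : s^2 < 1 := by
      rw [hs2, div_lt_one (by positivity)]; linarith
    nlinarith
  have step1 : 4*s*g3*d1^2*d3 ≤ g2*g3*d1*d3^2 + g1*g3*d1^2*d2 := by
    have hid0 : g1*g2*g3*d1^2*d2 = 4*s^2*g3*d1^3 := by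
      linear_combination (-(g3*d1^2)) * hs2'
    nlinarith [mul_nonneg (mul_nonneg hg3.le hd1.le) (sq_nonneg (g2*d3 - 2*s*d1)),
      hid0, hg2, mul_pos hg2 hd1]
  have hid : g1*g2*d2^2*d3 = 4*s^2*(d1*d2*d3) := by linear_combination (-(d2*d3)) * hs2'
  have h5 : 4*s*g3*d1^2*d3 + 4*s^2*(d1*d2*d3) < (4+g1*g2*g3)*(d1*d2*d3) := by linarith
  have h6 := mul_lt_mul_of_pos_left h5 hs0
  have hid2 : s*(4*s*g3*d1^2*d3) = g1*g2*g3*d2*(d1*d3) := by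
    linear_combination (g3*d1*d3) * hs2'
  have h7 : (g1*g2*g3 + 4*s^3) * (d1*d2*d3) < (s*(4+g1*g2*g3)) * (d1*d2*d3) := by
    nlinarith [h6, hid2]
  have hd : (0:ℝ) < d1*d2*d3 := by positivity
  have h8 : g1*g2*g3 + 4*s^3 < s*(4+g1*g2*g3) := lt_of_mul_lt_mul_right h7 hd.le
  have hfin : 0 < (1 - s) * (g1*g2*g3 - 4*s - 4*s^2) := by
    have h48 : 4*s + 4*s^2 < 8 := by nlinarith
    have : 0 < 1 - s := by linarith
    have : 0 < g1*g2*g3 - 4*s - 4*s^2 := by linarith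
    positivity
  nlinarith [h8, hfin]

set_option maxHeartbeats 2000000 in
theorem cyclic3_diag_stable_iff (γ : Fin 3 → ℝ) (hγ : ∀ i, 0 < γ i) :
    DiagStable !![-(γ 0)⁻¹, 0, -1;
                  1, -(γ 1)⁻¹, 0;
                  0, 1, -(γ 2)⁻¹] ↔ γ 0 * γ 1 * γ 2 < 8 := by
  have hγ0 := hγ 0; have hγ1 := hγ 1; have hγ2 := hγ 2
  have hform : ∀ d x : Fin 3 → ℝ,
      x ⬝ᵥ ((!![-(γ 0)⁻¹, 0, -1;
                  1, -(γ 1)⁻¹, 0;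
                  0, 1, -(γ 2)⁻¹]ᵀ * diagonal d + diagonal d * !![-(γ 0)⁻¹, 0, -1;
                  1, -(γ 1)⁻¹, 0;
                  0, 1, -(γ 2)⁻¹]).mulVec x) =
      -(2*d 0/γ 0)*(x 0)^2 - (2*d 1/γ 1)*(x 1)^2 - (2*d 2/γ 2)*(x 2)^2
        + 2*(d 1)*(x 0)*(x 1) - 2*(d 0)*(x 0)*(x 2) + 2*(d 2)*(x 1)*(x 2) := by
    intro d x
    simp [dotProduct, mulVec, Fin.sum_univ_three, Matrix.mul_apply, diagonal,
      Matrix.transpose_apply, vecHead, vecTail]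
    ring
  constructor
  · rintro ⟨d, hd, hQ⟩
    have hd0 := hd 0; have hd1 := hd 1; have hd2 := hd 2
    by_contra h8
    push_neg at h8
    -- first test vector: Δ2 > 0
    have hapos : 0 < 2*d 0/γ 0 := by positivity
    have hv1ne : (![d 1, 2*d 0/γ 0, 0] : Fin 3 → ℝ) ≠ 0 := by
      intro h
      have h1 : (2*d 0/γ 0) = 0 := congrFun h 1
      linarith
    have hQ1 := hQ _ hv1ne
    rw [hform] at hQ1
    simp only [show (![d 1, 2*d 0/γ 0, 0] : Fin 3 → ℝ) 0 = d 1 from rfl,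
      show (![d 1, 2*d 0/γ 0, 0] : Fin 3 → ℝ) 1 = 2*d 0/γ 0 from rfl,
      show (![d 1, 2*d 0/γ 0, 0] : Fin 3 → ℝ) 2 = 0 from rfl] at hQ1
    have hA : γ 0*γ 1*d 1 < 4*d 0 := by
      have hmul := mul_neg_of_pos_of_neg (show (0:ℝ) < γ 0^2*γ 1 by positivity) hQ1
      have hiden : γ 0^2*γ 1 * (-(2*d 0/γ 0)*(d 1)^2 - (2*d 1/γ 1)*(2*d 0/γ 0)^2 - (2*d 2/γ 2)*(0:ℝ)^2
          + 2*(d 1)*(d 1)*(2*d 0/γ 0) - 2*(d 0)*(d 1)*0 + 2*(d 2)*(2*d 0/γ 0)*0)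
          = 2*γ 0*γ 1*d 0*(d 1)^2 - 8*(d 0)^2*(d 1) := by
        field_simp
        ring
      rw [hiden] at hmul
      nlinarith [mul_pos hd0 hd1, hmul]
    have hΔ2 : 0 < (2*d 0/γ 0)*(2*d 1/γ 1) - (d 1)^2 := by
      have e : (2*d 0/γ 0)*(2*d 1/γ 1) - (d 1)^2 = d 1*(4*d 0 - γ 0*γ 1*d 1)/(γ 0*γ 1) := by
        field_simp; ring
      rw [e]
      exact div_pos (mul_pos hd1 (by linarith)) (by positivity)
    -- second test vector: cofactor vector, gives det > 0
    set w : Fin 3 → ℝ := ![d 1*d 2 - (2*d 1/γ 1)*d 0, (2*d 0/γ 0)*d 2 - d 0*d 1,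
      (2*d 0/γ 0)*(2*d 1/γ 1) - (d 1)^2] with hw
    have hwne : w ≠ 0 := by
      intro h
      have h2 : ((2*d 0/γ 0)*(2*d 1/γ 1) - (d 1)^2) = 0 := congrFun h 2
      linarith
    have hQ3 := hQ _ hwne
    rw [hform] at hQ3
    simp only [show w 0 = d 1*d 2 - (2*d 1/γ 1)*d 0 from rfl,
      show w 1 = (2*d 0/γ 0)*d 2 - d 0*d 1 from rfl,
      show w 2 = (2*d 0/γ 0)*(2*d 1/γ 1) - (d 1)^2 from rfl] at hQ3
    set Δ3 : ℝ := (2*d 0/γ 0)*(2*d 1/γ 1)*(2*d 2/γ 2) + 2*(d 0)*(d 1)*(d 2)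
      - (2*d 0/γ 0)*(d 2)^2 - (2*d 1/γ 1)*(d 0)^2 - (2*d 2/γ 2)*(d 1)^2 with hΔ3def
    have hiden3 : -(2*d 0/γ 0)*(d 1*d 2 - (2*d 1/γ 1)*d 0)^2
        - (2*d 1/γ 1)*((2*d 0/γ 0)*d 2 - d 0*d 1)^2
        - (2*d 2/γ 2)*((2*d 0/γ 0)*(2*d 1/γ 1) - (d 1)^2)^2
        + 2*(d 1)*(d 1*d 2 - (2*d 1/γ 1)*d 0)*((2*d 0/γ 0)*d 2 - d 0*d 1)
        - 2*(d 0)*(d 1*d 2 - (2*d 1/γ 1)*d 0)*((2*d 0/γ 0)*(2*d 1/γ 1) - (d 1)^2)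
        + 2*(d 2)*((2*d 0/γ 0)*d 2 - d 0*d 1)*((2*d 0/γ 0)*(2*d 1/γ 1) - (d 1)^2)
        = -(((2*d 0/γ 0)*(2*d 1/γ 1) - (d 1)^2) * Δ3) := by
      rw [hΔ3def]; ring
    rw [hiden3] at hQ3
    have hΔ3 : 0 < Δ3 := by
      by_contra hc
      push_neg at hc
      nlinarith [hQ3, mul_nonpos_of_nonneg_of_nonpos hΔ2.le hc]
    have hmul3 : 0 < Δ3 * (γ 0*γ 1*γ 2/2) := mul_pos hΔ3 (by positivity)
    have hiden4 : Δ3 * (γ 0*γ 1*γ 2/2)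
        = (4 + γ 0*γ 1*γ 2)*(d 0*d 1*d 2)
          - (γ 1*γ 2*(d 0)*(d 2)^2 + γ 0*γ 2*(d 0)^2*(d 1) + γ 0*γ 1*(d 1)^2*(d 2)) := by
      rw [hΔ3def]; field_simp; ring
    rw [hiden4] at hmul3
    exact sec_key (γ 0) (γ 1) (γ 2) (d 0) (d 1) (d 2) hγ0 hγ1 hγ2 hd0 hd1 hd2 h8 hA
      (by linarith)
  · intro hlt
    have hGpos : (0:ℝ) < γ 0*γ 1*γ 2 := by positivity
    obtain ⟨p, hp0, hp3⟩ : ∃ p : ℝ, 0 < p ∧ p^3 = γ 0*γ 1*γ 2 := by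
      refine ⟨(γ 0*γ 1*γ 2) ^ ((1:ℝ)/3), Real.rpow_pos_of_pos hGpos _, ?_⟩
      rw [← Real.rpow_natCast ((γ 0*γ 1*γ 2) ^ ((1:ℝ)/3)) 3,
        ← Real.rpow_mul hGpos.le]
      norm_num
    have hp2 : p < 2 := by nlinarith [hp3, hp0, mul_pos hp0 hp0]
    refine ⟨![γ 1, p^2/γ 0, p], ?_, ?_⟩
    · intro i
      fin_cases i
      · exact hγ1
      · exact div_pos (pow_pos hp0 2) hγ0
      · exact hp0
    · intro x hx
      rw [hform]
      simp only [Matrix.cons_val_zero, Matrix.cons_val_one, Matrix.head_cons,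
        Matrix.cons_val_two, Matrix.tail_cons]
      have hv : ¬(x 0 = 0 ∧ x 1 = 0 ∧ x 2 = 0) := by
        rintro ⟨h0, h1, h2⟩
        apply hx
        funext i
        fin_cases i <;> assumption
      have h1 : 0 < 2*γ 1/γ 0 := by positivity
      have h2 : 0 < (2*γ 1/γ 0)*(2*(p^2/γ 0)/γ 1) - (-(p^2/γ 0))^2 := by
        have e : (2*γ 1/γ 0)*(2*(p^2/γ 0)/γ 1) - (-(p^2/γ 0))^2 = p^2*((2-p)*(2+p))/γ 0^2 := by
          field_simp; ring
        rw [e]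
        have h2p : 0 < 2 - p := by linarith
        have h2p' : 0 < 2 + p := by linarith
        positivity
      have h3 : 0 < (2*γ 1/γ 0)*(2*(p^2/γ 0)/γ 1)*(2*p/γ 2)
          + 2*(-(p^2/γ 0))*(γ 1)*(-p)
          - (2*γ 1/γ 0)*(-p)^2 - (2*(p^2/γ 0)/γ 1)*(γ 1)^2 - (2*p/γ 2)*(-(p^2/γ 0))^2 := by
        have e : (2*γ 1/γ 0)*(2*(p^2/γ 0)/γ 1)*(2*p/γ 2)
            + 2*(-(p^2/γ 0))*(γ 1)*(-p)
            - (2*γ 1/γ 0)*(-p)^2 - (2*(p^2/γ 0)/γ 1)*(γ 1)^2 - (2*p/γ 2)*(-(p^2/γ 0))^2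
            = 2*p^3*((p+1)*(2-p)^2)/(γ 0^2*γ 2) := by
          field_simp
          linear_combination (2 - p) * hp3
        rw [e]
        have h2p : 0 < 2 - p := by linarith
        have hnum : 0 < 2*p^3*((p+1)*(2-p)^2) := by positivity
        positivity
      have hpd := pd_aux (2*γ 1/γ 0) (2*(p^2/γ 0)/γ 1) (2*p/γ 2) (-(p^2/γ 0)) (γ 1) (-p)
        (x 0) (x 1) (x 2) h1 h2 h3 hv
      nlinarith [hpd]
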